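/- Let A, B be nonempty compact subsets of the nonnegative orthant of R^n such that A weakly dominates B and A strongly dominates B, i.e., there exist a ∈ A and ε > 0 such that the closed cube [a − ε·1, a] lies in the nonnegative orthant and is disjoint from B^D. If f : R^n_{≥0} → R is continuous and strictly positive everywhere, then ∫_{A^D} f dx > ∫_{B^D} f dx (Lebesgue integrals). -/

import Mathlib

open Set MeasureTheory

/-- The positive domination closure of `A` inside the nonnegative orthant. -/
def domClosure {n : ℕ} (A : Set (Fin n → ℝ)) : Set (Fin n → ℝ) :=
  {x | (∀ i, 0 ≤ x i) ∧ ∃ a ∈ A, ∀ i, x i ≤ a i}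

/-- `A` weakly dominates `B`. -/
def weaklyDominates {n : ℕ} (A B : Set (Fin n → ℝ)) : Prop :=
  ∀ b ∈ B, ∃ a ∈ A, ∀ i, b i ≤ a i

lemma domClosure_isCompact {n : ℕ} {A : Set (Fin n → ℝ)}
    (hA : A ⊆ {x | ∀ i, 0 ≤ x i}) (hAc : IsCompact A) :
    IsCompact (domClosure A) := by
  have himg : domClosure A =
      (fun p : (Fin n → ℝ) × (Fin n → ℝ) => fun i => p.2 i * p.1 i) ''
        (A ×ˢ Icc (0 : Fin n → ℝ) 1) := by
    ext x
    constructor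
    · rintro ⟨hx0, a, ha, hxa⟩
      refine ⟨(a, fun i => if a i = 0 then 0 else x i / a i), ⟨ha, ?_, ?_⟩, ?_⟩
      · intro i
        by_cases h : a i = 0 <;> simp [h]
        exact div_nonneg (hx0 i) (hA ha i)
      · intro i
        by_cases h : a i = 0 <;> simp [h]
        exact div_le_one_of_le₀ (hxa i) (hA ha i)
      · funext i
        by_cases h : a i = 0
        · simp only [h, if_pos]
          have : x i ≤ 0 := h ▸ hxa i
          simpa using (le_antisymm this (hx0 i)).symm
        · simp only [h, if_neg, if_false]
          field_simp
    · rintro ⟨⟨a, t⟩, ⟨ha, ht0, ht1⟩, rfl⟩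
      refine ⟨fun i => mul_nonneg (ht0 i) (hA ha i), a, ha, fun i => ?_⟩
      calc t i * a i ≤ 1 * a i := mul_le_mul_of_nonneg_right (ht1 i) (hA ha i)
        _ = a i := one_mul _
  rw [himg]
  exact (hAc.prod isCompact_Icc).image <| continuous_pi fun i =>
    ((continuous_apply i).comp continuous_snd).mul ((continuous_apply i).comp continuous_fst)

theorem integral_strict_mono_of_strong_dominance {n : ℕ} (A B : Set (Fin n → ℝ))
    (hA : A ⊆ {x | ∀ i, 0 ≤ x i}) (hB : B ⊆ {x | ∀ i, 0 ≤ x i})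
    (hAne : A.Nonempty) (hBne : B.Nonempty)
    (hAc : IsCompact A) (hBc : IsCompact B)
    (hdom : weaklyDominates A B)
    (hstrong : ∃ a ∈ A, ∃ ε > (0 : ℝ),
      (∀ i, 0 ≤ a i - ε) ∧
      Set.Icc (fun i => a i - ε) a ∩ domClosure B = ∅)
    (f : (Fin n → ℝ) → ℝ) (hfc : Continuous f) (hfpos : ∀ x, 0 < f x) :
    ∫ x in domClosure B, f x < ∫ x in domClosure A, f x := by
  obtain ⟨a, haA, ε, hε, hεnn, hdisj⟩ := hstrong
  set C : Set (Fin n → ℝ) := Set.Icc (fun i => a i - ε) a with hC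
  have hAd : IsCompact (domClosure A) := domClosure_isCompact hA hAc
  have hBd : IsCompact (domClosure B) := domClosure_isCompact hB hBc
  have hAm : MeasurableSet (domClosure A) := hAd.isClosed.measurableSet
  have hBm : MeasurableSet (domClosure B) := hBd.isClosed.measurableSet
  have hBA : domClosure B ⊆ domClosure A := by
    rintro x ⟨hx0, b, hb, hxb⟩
    obtain ⟨a', ha', hba'⟩ := hdom b hb
    exact ⟨hx0, a', ha', fun i => (hxb i).trans (hba' i)⟩
  have hCA : C ⊆ domClosure A := by
    rintro x ⟨hx1, hx2⟩
    exact ⟨fun i => (hεnn i).trans (hx1 i), a, haA, hx2⟩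
  have hCB : C ⊆ domClosure A \ domClosure B := by
    intro x hx
    refine ⟨hCA hx, fun hxB => ?_⟩
    have : x ∈ C ∩ domClosure B := ⟨hx, hxB⟩
    simp [hdisj] at this
  have hintA : IntegrableOn f (domClosure A) := hfc.continuousOn.integrableOn_compact hAd
  have hintB : IntegrableOn f (domClosure B) := hfc.continuousOn.integrableOn_compact hBd
  have hintD : IntegrableOn f (domClosure A \ domClosure B) :=
    hintA.mono_set diff_subset
  have hCvol : 0 < volume C := by
    rw [hC, Real.volume_Icc_pi]
    rw [CanonicallyOrderedAdd.prod_pos]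
    intro i _
    simp only [show a i - (a i - ε) = ε by ring]
    exact ENNReal.ofReal_pos.2 hε
  have hCm : MeasurableSet C := measurableSet_Icc
  have hpos : 0 < ∫ x in domClosure A \ domClosure B, f x := by
    have h1 : 0 < ∫ x in C, f x := by
      rw [setIntegral_pos_iff_support_of_nonneg_ae
        (Filter.Eventually.of_forall fun x => (hfpos x).le)
        (hintA.mono_set hCA)]
      have : Function.support f = univ := eq_univ_of_forall fun x => (hfpos x).ne'
      rwa [this, univ_inter]
    refine lt_of_lt_of_le h1 (setIntegral_mono_set hintD
      (Filter.Eventually.of_forall fun x => (hfpos x).le)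
      (HasSubset.Subset.eventuallyLE hCB))
  have hsplit : ∫ x in domClosure A, f x =
      (∫ x in domClosure B, f x) + ∫ x in domClosure A \ domClosure B, f x := by
    rw [← setIntegral_union disjoint_sdiff_right (hAm.diff hBm) hintB hintD,
      union_diff_cancel hBA]
  linarith
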